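/- arXiv:1404.6281 — 2 statements merged into one kernel-verified Lean document; each statement's English description precedes it below -/
import Mathlib

section
/- Let F_q be a finite field and n a positive integer with q ≡ 3 (mod 4), 8 | n, and rad(n) dividing q − 1. Set m = n/gcd(n, q² − 1). Then for each odd divisor t of m, the number of distinct monic irreducible factors of x^n − 1 in F_q[x] of degree 2t that are binomials (i.e. of the form x^{2t} − a with a ∈ F_q^*) equals (φ(t)/(2t)) · gcd(n, q − 1). -/
open Polynomial IntermediateField

universe u

theorem aux_X_pow_two_mul_sub_C_irreducible {K : Type u} [Field K] {t : ℕ} (ht : Odd t) {a : K}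
    (ha : ∀ p : ℕ, p.Prime → p ∣ 2 * t → ∀ b : K, b ^ p ≠ a) :
    Irreducible (X ^ (2 * t) - C a) := by
  rw [mul_comm]
  apply X_pow_mul_sub_C_irreducible
    (X_pow_sub_C_irreducible_of_prime Nat.prime_two (ha 2 Nat.prime_two (dvd_mul_right 2 t)))
  intro E _ _ x hx
  have hint : IsIntegral K x := not_not.mp fun h ↦ by
    simpa only [degree_zero, degree_X_pow_sub_C (by norm_num : 0 < 2),
      WithBot.natCast_ne_bot] using congr_arg degree (hx.symm.trans (dif_neg h))
  apply X_pow_sub_C_irreducible_of_odd ht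
  intro p hp hpt b hb
  have hp2 : p ≠ 2 := by rintro rfl; exact (Nat.not_even_iff_odd.mpr ht) (even_iff_two_dvd.mpr hpt)
  have hpodd : Odd p := hp.odd_of_ne_two hp2
  apply ha p hp (hpt.mul_left 2) (-(Algebra.norm K b))
  rw [hpodd.neg_pow, ← map_pow, hb, ← adjoin.powerBasis_gen hint,
    Algebra.PowerBasis.norm_gen_eq_coeff_zero_minpoly]
  simp [minpoly_gen, hx]

theorem aux_binomial_dvd_iff {K : Type*} [Field K] {k : ℕ} (hk : 0 < k) (s : ℕ) (a : K) :
    (X ^ k - C a) ∣ (X ^ (k * s) - 1 : K[X]) ↔ a ^ s = 1 := by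
  have key : (X ^ (k * s) - 1 : K[X]) = ((X ^ k) ^ s - (C a) ^ s) + C (a ^ s - 1) := by
    rw [map_sub, map_pow, map_one, pow_mul]; ring
  rw [key, dvd_add_right (sub_dvd_pow_sub_pow _ _ s)]
  constructor
  · intro h
    by_contra hne
    have h0 : (a ^ s - 1) ≠ 0 := sub_ne_zero.mpr hne
    have := Polynomial.degree_le_of_dvd h (C_ne_zero.mpr h0)
    rw [degree_C h0, degree_X_pow_sub_C hk] at this
    exact absurd this (by simp [hk.ne'])
  · intro h; simp [h]

theorem aux_count_coprime_range (r : ℕ) (c : ℕ) :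
    ((Finset.range (c * r)).filter (fun j => r.Coprime j)).card = c * r.totient := by
  induction c with
  | zero => simp
  | succ c ih =>
    have : (c + 1) * r = c * r + r := by ring
    rw [this, Finset.range_eq_Ico, ← Finset.Ico_union_Ico_eq_Ico (Nat.zero_le _)
      (Nat.le_add_right _ _), Finset.filter_union, Finset.card_union_of_disjoint
      (Finset.disjoint_filter_filter (Finset.Ico_disjoint_Ico_consecutive _ _ _)),
      ← Finset.range_eq_Ico, ih, Nat.filter_coprime_Ico_eq_totient r (c * r)]
    ring

theorem aux_fact_le {a b : ℕ} (ha : a ≠ 0) (hb : b ≠ 0) (hab : a ∣ b) (p : ℕ) :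
    a.factorization p ≤ b.factorization p :=
  (Finsupp.le_def.mp ((Nat.factorization_le_iff_dvd ha hb).mpr hab)) p

/-- If `q ≡ 3 (mod 4)`, `8 ∣ n` and `rad(n) ∣ q - 1`, then for each odd divisor `t` of
`m = n / gcd(n, q² - 1)`, the number of distinct monic irreducible binomial factors
`x^{2t} - a` of `x^n - 1` over `F_q` of degree `2t` is `(φ(t)/(2t))·gcd(n, q - 1)`. -/
theorem count_irreducible_binomials_degree_two_t {F : Type*} [Field F] [Fintype F]
    (q : ℕ) (hq : q = Fintype.card F) (n : ℕ) (hn : 0 < n)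
    (h1 : q % 4 = 3) (h2 : 8 ∣ n)
    (h3 : (∏ p ∈ n.primeFactors, p) ∣ (q - 1))
    (m : ℕ) (hm : m = n / Nat.gcd n (q ^ 2 - 1)) :
    ∀ t, t ∣ m → Odd t →
      (({f : Polynomial F | f.Monic ∧ Irreducible f ∧ f ∣ (X ^ n - 1 : Polynomial F) ∧
            f.natDegree = 2 * t ∧ ∃ a : F, a ≠ 0 ∧ f = X ^ (2 * t) - C a}.ncard : ℚ)
        = (Nat.totient t : ℚ) / (2 * t : ℚ) * (Nat.gcd n (q - 1) : ℚ)) := by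
  intro t htm ht
  have hq3 : 3 ≤ q := by omega
  have hn0 : n ≠ 0 := hn.ne'
  have hq10 : q - 1 ≠ 0 := by omega
  have ht0 : 0 < t := ht.pos
  have h2t : ¬ (2 ∣ t) := by
    rcases ht with ⟨j, hj⟩; omega
  set k := 2 * t with hkdef
  have hk0 : 0 < k := by positivity
  set g := Nat.gcd n (q - 1) with hgdef
  have hg0 : 0 < g := Nat.gcd_pos_of_pos_left _ hn
  have hgq1 : g ∣ q - 1 := Nat.gcd_dvd_right _ _
  have hgn : g ∣ n := Nat.gcd_dvd_left _ _
  set d := Nat.gcd n (q ^ 2 - 1) with hddef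
  have hq210 : q ^ 2 - 1 ≠ 0 := by
    have h9 : 3 * 3 ≤ q * q := Nat.mul_le_mul hq3 hq3
    have : q ^ 2 = q * q := sq q
    omega
  have hd0 : 0 < d := Nat.gcd_pos_of_pos_left _ hn
  have hdn : d ∣ n := Nat.gcd_dvd_left _ _
  have hm0 : m ≠ 0 := by rw [hm]; exact (Nat.div_pos (Nat.le_of_dvd hn hdn) hd0).ne'
  have hq1q21 : (q - 1) ∣ (q ^ 2 - 1) := by simpa using Nat.sub_dvd_pow_sub_pow q 1 2
  have hgd : g ∣ d := Nat.dvd_gcd hgn (hgq1.trans hq1q21)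
  have htn : t ∣ n := htm.trans (hm ▸ Nat.div_dvd_of_dvd hdn)
  have h2q1 : 2 ∣ q - 1 := by omega
  have h4q1 : ¬ (4 ∣ q - 1) := by omega
  have h2g : 2 ∣ g := Nat.dvd_gcd (dvd_trans (by norm_num) h2) h2q1
  -- every prime dividing k divides g
  have hP0 : ∀ p : ℕ, p.Prime → p ∣ k → p ∣ g := by
    intro p hp hpk
    rcases (Nat.Prime.dvd_mul hp).mp hpk with hp2 | hpt
    · exact ((Nat.prime_dvd_prime_iff_eq hp Nat.prime_two).mp hp2) ▸ h2g
    · refine Nat.dvd_gcd (hpt.trans htn) ?_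
      exact dvd_trans
        (Finset.dvd_prod_of_mem _ (Nat.mem_primeFactors.mpr ⟨hp, hpt.trans htn, hn0⟩)) h3
  have hv2q1 : (q - 1).factorization 2 = 1 := by
    have hle : 1 ≤ (q - 1).factorization 2 := by
      rw [← Nat.Prime.pow_dvd_iff_le_factorization Nat.prime_two hq10]; simpa using h2q1
    have hlt : (q - 1).factorization 2 < 2 := by
      by_contra hcon
      push_neg at hcon
      have : (2 : ℕ) ^ 2 ∣ q - 1 :=
        (Nat.Prime.pow_dvd_iff_le_factorization Nat.prime_two hq10).mpr hcon
      norm_num at this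
      omega
    omega
  set c := (q - 1) / g with hcdef
  have hcg : c * g = q - 1 := Nat.div_mul_cancel hgq1
  have hc0 : c ≠ 0 := by
    rintro h; rw [h] at hcg; simp at hcg; omega
  -- primes dividing k do not divide c
  have hP : ∀ p : ℕ, p.Prime → p ∣ k → ¬ p ∣ c := by
    intro p hp hpk hpc
    rcases (Nat.Prime.dvd_mul hp).mp hpk with hp2 | hpt
    · have hp2' : p = 2 := (Nat.prime_dvd_prime_iff_eq hp Nat.prime_two).mp hp2
      subst hp2'
      obtain ⟨c', hc'⟩ := hpc
      obtain ⟨g', hg'⟩ := h2g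
      exact h4q1 ⟨c' * g', by rw [← hcg, hc', hg']; ring⟩
    · -- p odd dividing t
      have hpg : p ∣ g := hP0 p hp hpk
      have hpgq1 : p * g ∣ q - 1 := by
        obtain ⟨c', hc'⟩ := hpc
        exact ⟨c', by rw [← hcg, hc']; ring⟩
      have hγα : g.factorization p + 1 ≤ (q - 1).factorization p := by
        have hdvd : p ^ (g.factorization p + 1) ∣ q - 1 := by
          calc p ^ (g.factorization p + 1) = p * p ^ (g.factorization p) := by ring
          _ ∣ p * g := mul_dvd_mul_left p (Nat.ordProj_dvd g p)
          _ ∣ q - 1 := hpgq1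
        exact (Nat.Prime.pow_dvd_iff_le_factorization hp hq10).mp hdvd
      have hγ : g.factorization p = min (n.factorization p) ((q - 1).factorization p) := by
        rw [hgdef, Nat.factorization_gcd hn0 hq10]
        simp [Finsupp.inf_apply]
      have hβ : g.factorization p = n.factorization p ∧
          n.factorization p < (q - 1).factorization p := by omega
      have hαα₂ : (q - 1).factorization p ≤ (q ^ 2 - 1).factorization p :=
        aux_fact_le hq10 hq210 hq1q21 p
      have hδ : d.factorization p = min (n.factorization p) ((q ^ 2 - 1).factorization p) := by
        rw [hddef, Nat.factorization_gcd hn0 hq210]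
        simp [Finsupp.inf_apply]
      have hδβ : d.factorization p = n.factorization p := by omega
      -- p ∣ m gives contradiction
      have hpm : p ∣ m := hpt.trans htm
      have hdpn : d * p ∣ n := by
        rw [hm] at hpm
        exact (Nat.dvd_div_iff_mul_dvd hdn).mp hpm
      have : p ^ (n.factorization p + 1) ∣ n := by
        calc p ^ (n.factorization p + 1) = p ^ (d.factorization p) * p := by rw [hδβ]; ring
        _ ∣ d * p := mul_dvd_mul_right (Nat.ordProj_dvd d p) p
        _ ∣ n := hdpn
      have := (Nat.Prime.pow_dvd_iff_le_factorization hp hn0).mp this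
      omega
  -- k * g ∣ n
  have htgn : t * g ∣ n := by
    have hmd : m * d = n := by rw [hm]; exact Nat.div_mul_cancel hdn
    exact hmd ▸ mul_dvd_mul htm hgd
  have hkgn : k * g ∣ n := by
    obtain ⟨w, hw⟩ := htgn
    have hw0 : w ≠ 0 := by rintro rfl; rw [mul_zero] at hw; exact hn0 hw
    have h3f : 3 ≤ n.factorization 2 := by
      rw [← Nat.Prime.pow_dvd_iff_le_factorization Nat.prime_two hn0]
      norm_num
      exact h2
    have h2w : 2 ∣ w := by
      rw [hw, Nat.factorization_mul (mul_ne_zero ht0.ne' hg0.ne') hw0,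
        Nat.factorization_mul ht0.ne' hg0.ne'] at h3f
      simp only [Finsupp.add_apply, Finsupp.coe_add, Pi.add_apply] at h3f
      have hvt : t.factorization 2 = 0 := Nat.factorization_eq_zero_of_not_dvd h2t
      have hvg : g.factorization 2 ≤ 1 := hv2q1 ▸ aux_fact_le hg0.ne' hq10 hgq1 2
      have hvw : 1 ≤ w.factorization 2 := by omega
      have := (Nat.Prime.pow_dvd_iff_le_factorization Nat.prime_two hw0).mpr hvw
      simpa using this
    obtain ⟨w', rfl⟩ := h2w
    exact ⟨w', by rw [hw, hkdef]; ring⟩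
  have hkn : k ∣ n := (dvd_mul_right k g).trans hkgn
  set s := n / k with hsdef
  have hn_eq : k * s = n := Nat.mul_div_cancel' hkn
  have hgs : g ∣ s := (Nat.dvd_div_iff_mul_dvd hkn).mpr hkgn
  have hsn : s ∣ n := Nat.div_dvd_of_dvd hkn
  -- the cyclic group of units
  have hcard : Nat.card Fˣ = q - 1 := by rw [Nat.card_units, Nat.card_eq_fintype_card, hq]
  obtain ⟨ζ, hζ⟩ := IsCyclic.exists_generator (α := Fˣ)
  have hordζ : orderOf ζ = q - 1 := by
    rw [orderOf_eq_card_of_forall_mem_zpowers hζ, hcard]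
  have hzpow : ∀ u : Fˣ, ∃ i : ℕ, ζ ^ i = u := by
    intro u
    have := mem_powers_iff_mem_zpowers.mpr (hζ u)
    exact (Submonoid.mem_powers_iff u ζ).mp this
  set w : Fˣ := ζ ^ c with hwdef
  have hordw : orderOf w = g := by
    rw [hwdef, orderOf_pow' ζ hc0, hordζ, Nat.gcd_eq_right ⟨g, hcg.symm⟩, hcdef,
      Nat.div_div_self hgq1 hq10]
  have hwg1 : w ^ g = 1 := by rw [← hordw]; exact pow_orderOf_eq_one w
  -- order-s vs order-g
  have key_su : ∀ u : Fˣ, (u ^ s = 1 ↔ u ^ g = 1) := by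
    intro u
    rw [← orderOf_dvd_iff_pow_eq_one, ← orderOf_dvd_iff_pow_eq_one]
    constructor
    · intro hos
      have hoq : orderOf u ∣ q - 1 := hcard ▸ orderOf_dvd_natCard u
      exact (Nat.dvd_gcd hoq hos).trans
        (Nat.dvd_gcd ((Nat.gcd_dvd_right _ _).trans hsn) (Nat.gcd_dvd_left _ _))
    · intro hog; exact hog.trans hgs
  -- the sets
  set A : Set F :=
    {a | a ≠ 0 ∧ a ^ s = 1 ∧ ∀ p : ℕ, p.Prime → p ∣ k → ∀ b : F, b ^ p ≠ a} with hAdef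
  set U : Set Fˣ :=
    {u | u ^ g = 1 ∧ ∀ p : ℕ, p.Prime → p ∣ k → ∀ b : F, b ^ p ≠ (u : F)} with hUdef
  set J : Set ℕ := {j | j < g ∧ Nat.Coprime k j} with hJdef
  have h_poly : {f : Polynomial F | f.Monic ∧ Irreducible f ∧ f ∣ (X ^ n - 1 : Polynomial F) ∧
      f.natDegree = k ∧ ∃ a : F, a ≠ 0 ∧ f = X ^ k - C a}
      = (fun a : F => X ^ k - C a) '' A := by
    ext f
    simp only [Set.mem_setOf_eq, Set.mem_image, hAdef]
    constructor
    · rintro ⟨hmon, hirr, hdvd, hdeg, a, ha0, rfl⟩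
      refine ⟨a, ⟨ha0, ?_, ?_⟩, rfl⟩
      · rw [← hn_eq] at hdvd
        exact (aux_binomial_dvd_iff hk0 s a).mp hdvd
      · intro p hp hpk b
        exact pow_ne_of_irreducible_X_pow_sub_C hirr hpk hp.ne_one b
    · rintro ⟨a, ⟨ha0, has, hC3⟩, rfl⟩
      refine ⟨monic_X_pow_sub_C a hk0.ne', ?_, ?_, natDegree_X_pow_sub_C, a, ha0, rfl⟩
      · rw [hkdef]
        exact aux_X_pow_two_mul_sub_C_irreducible ht (by rw [← hkdef]; exact hC3)
      · rw [← hn_eq]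
        exact (aux_binomial_dvd_iff hk0 s a).mpr has
  have h_AU : A = (fun u : Fˣ => (u : F)) '' U := by
    ext a
    simp only [Set.mem_setOf_eq, Set.mem_image, hAdef, hUdef]
    constructor
    · rintro ⟨ha0, has, hC3⟩
      refine ⟨Units.mk0 a ha0, ⟨?_, ?_⟩, rfl⟩
      · rw [← key_su]
        apply Units.ext
        simpa using has
      · simpa using hC3
    · rintro ⟨u, ⟨hug, hC3⟩, rfl⟩
      refine ⟨u.ne_zero, ?_, hC3⟩
      have hus : u ^ s = 1 := (key_su u).mpr hug
      calc (u : F) ^ s = ((u ^ s : Fˣ) : F) := by simp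
      _ = 1 := by rw [hus]; simp
  have h_UJ : U = (fun j : ℕ => w ^ j) '' J := by
    ext u
    simp only [Set.mem_setOf_eq, Set.mem_image, hUdef, hJdef]
    constructor
    · rintro ⟨hug, hC3⟩
      obtain ⟨i, hi⟩ := hzpow u
      have hci : c ∣ i := by
        have h1' : ζ ^ (i * g) = 1 := by rw [pow_mul, hi, hug]
        have hdvd : (q - 1) ∣ i * g := hordζ ▸ orderOf_dvd_iff_pow_eq_one.mpr h1'
        rw [← hcg] at hdvd
        exact (Nat.mul_dvd_mul_iff_right hg0).mp hdvd
      obtain ⟨j0, rfl⟩ := hci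
      have hwj : w ^ (j0 % g) = u := by
        rw [← hordw, pow_mod_orderOf, hwdef, ← pow_mul, hi]
      refine ⟨j0 % g, ⟨Nat.mod_lt _ hg0, ?_⟩, hwj⟩
      by_contra hnc
      obtain ⟨p, hp, hpdvd⟩ := Nat.exists_prime_and_dvd hnc
      have hpk : p ∣ k := hpdvd.trans (Nat.gcd_dvd_left _ _)
      have hpj : p ∣ j0 % g := hpdvd.trans (Nat.gcd_dvd_right _ _)
      obtain ⟨j', hj'⟩ := hpj
      apply hC3 p hp hpk ((w ^ j' : Fˣ) : F)
      have : (w ^ j') ^ p = u := by rw [← pow_mul, mul_comm j' p, ← hj', hwj]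
      rw [← this]
      simp
    · rintro ⟨j, ⟨hjg, hjcop⟩, rfl⟩
      refine ⟨by rw [← pow_mul, mul_comm, pow_mul, hwg1, one_pow], ?_⟩
      intro p hp hpk b hb
      have hb0 : b ≠ 0 := by
        rintro rfl
        rw [zero_pow hp.ne_zero] at hb
        exact (Units.ne_zero (w ^ j)) hb.symm
      have hbu : (Units.mk0 b hb0) ^ p = w ^ j := by
        apply Units.ext
        simpa using hb
      obtain ⟨i, hi⟩ := hzpow (Units.mk0 b hb0)
      have hmod : i * p ≡ c * j [MOD q - 1] := by
        rw [← hordζ]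
        apply pow_eq_pow_iff_modEq.mp
        rw [pow_mul, hi, hbu, hwdef, ← pow_mul]
      have hpq1 : p ∣ q - 1 := (hP0 p hp hpk).trans hgq1
      have hmodp : i * p ≡ c * j [MOD p] := hmod.of_dvd hpq1
      have hpcj : p ∣ c * j := by
        have h0 : i * p ≡ 0 [MOD p] := Nat.modEq_zero_iff_dvd.mpr (dvd_mul_left p i)
        exact Nat.modEq_zero_iff_dvd.mp (hmodp.symm.trans h0)
      rcases (Nat.Prime.dvd_mul hp).mp hpcj with hcase | hcase
      · exact hP p hp hpk hcase
      · have : p ∣ Nat.gcd k j := Nat.dvd_gcd hpk hcase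
        rw [hjcop] at this
        exact hp.ne_one (Nat.dvd_one.mp this)
  -- injectivity
  have hinj1 : Function.Injective (fun a : F => X ^ k - C a) := by
    intro a b hab
    simp only at hab
    exact C_inj.mp (sub_right_inj.mp hab)
  have hinjJ : Set.InjOn (fun j : ℕ => w ^ j) J := by
    apply Set.InjOn.mono _ (pow_injOn_Iio_orderOf)
    intro j hj
    rw [Set.mem_Iio, hordw]
    exact hj.1
  have hJfin : J = ↑((Finset.range g).filter fun j => Nat.Coprime k j) := by
    ext j
    simp [hJdef]
  -- the radical of k
  set r := ∏ p ∈ k.primeFactors, p with hrdef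
  have hr0 : r ≠ 0 := by
    rw [hrdef]
    exact (Finset.prod_pos fun p hp => (Nat.prime_of_mem_primeFactors hp).pos).ne'
  have hpfk_sub : k.primeFactors ⊆ g.primeFactors := by
    intro p hp
    have hp' := Nat.prime_of_mem_primeFactors hp
    exact Nat.mem_primeFactors.mpr ⟨hp', hP0 p hp' (Nat.dvd_of_mem_primeFactors hp), hg0.ne'⟩
  have hrg : r ∣ g :=
    (Finset.prod_dvd_prod_of_subset _ _ _ hpfk_sub).trans (Nat.prod_primeFactors_dvd g)
  have hcop_iff : ∀ j, Nat.Coprime k j ↔ Nat.Coprime r j := by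
    intro j
    rw [hrdef, Nat.coprime_prod_left_iff]
    constructor
    · intro hc p hp
      exact Nat.Coprime.coprime_dvd_left (Nat.dvd_of_mem_primeFactors hp) hc
    · intro hall
      by_contra hnc
      obtain ⟨p, hp, hpdvd⟩ := Nat.exists_prime_and_dvd hnc
      have hpk : p ∣ k := hpdvd.trans (Nat.gcd_dvd_left _ _)
      have hpj : p ∣ j := hpdvd.trans (Nat.gcd_dvd_right _ _)
      have := hall p (Nat.mem_primeFactors.mpr ⟨hp, hpk, hk0.ne'⟩)
      rw [Nat.Prime.coprime_iff_not_dvd hp] at this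
      exact this hpj
  -- compute the cardinality
  rw [h_poly, Set.ncard_image_of_injective _ hinj1, h_AU,
    Set.ncard_image_of_injective (f := fun u : Fˣ => (u : F)) _ (fun _ _ h => Units.ext h), h_UJ, Set.ncard_image_of_injOn hinjJ, hJfin,
    Set.ncard_coe_finset,
    Finset.filter_congr (fun j _ => by rw [hcop_iff j] : ∀ j ∈ Finset.range g,
      Nat.Coprime k j ↔ Nat.Coprime r j)]
  rw [show Finset.range g = Finset.range ((g / r) * r) by rw [Nat.div_mul_cancel hrg],
    aux_count_coprime_range r (g / r)]
  -- final arithmetic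
  have hpfr : r.primeFactors = k.primeFactors :=
    Nat.primeFactors_prod (fun p hp => Nat.prime_of_mem_primeFactors hp)
  have h2pf : 2 ∉ t.primeFactors := fun h => h2t (Nat.dvd_of_mem_primeFactors h)
  have hpfk : k.primeFactors = insert 2 t.primeFactors := by
    rw [hkdef, Nat.primeFactors_mul two_ne_zero ht0.ne', Nat.Prime.primeFactors Nat.prime_two,
      ← Finset.insert_eq]
  have e1 : (Nat.totient r : ℚ) = r * ((1 - 2⁻¹) * ∏ p ∈ t.primeFactors, (1 - (p : ℚ)⁻¹)) := by
    rw [Nat.totient_eq_mul_prod_factors, hpfr, hpfk, Finset.prod_insert h2pf]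
    norm_num
  have e2 : (Nat.totient t : ℚ) = t * ∏ p ∈ t.primeFactors, (1 - (p : ℚ)⁻¹) :=
    Nat.totient_eq_mul_prod_factors t
  have hprod : (∏ p ∈ t.primeFactors, (1 - (p : ℚ)⁻¹)) = (Nat.totient t : ℚ) / t := by
    rw [e2]
    field_simp
  have hrQ : (r : ℚ) ≠ 0 := Nat.cast_ne_zero.mpr hr0
  have htQ : (t : ℚ) ≠ 0 := Nat.cast_ne_zero.mpr ht0.ne'
  rw [Nat.cast_mul, Nat.cast_div hrg hrQ, e1, hprod]
  field_simp
  ring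
end

section
/- Let F_q be a finite field and n a positive integer with q ≡ 3 (mod 4), 8 | n, and rad(n) dividing q − 1. Set m = n/gcd(n, q² − 1) and r = min(ν_2(n/2), ν_2(q + 1)). Then the total number of distinct monic irreducible factors of x^n − 1 in F_q[x] equals gcd(n, q − 1) · (1/2 + 2^{r−2}·(2 + ν_2(m))) · ∏_{p | m, p odd prime} (1 + ν_p(m)·(p − 1)/p). -/
open Polynomial

open Polynomial Finset

/-- multiplicative order of `q` mod `d`. -/
noncomputable def ordq (q d : ℕ) : ℕ := orderOf (q : ZMod d)

lemma ordq_one (q : ℕ) : ordq q 1 = 1 := by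
  have : (q : ZMod 1) = 1 := Subsingleton.elim _ _
  simp [ordq, this]

lemma pow_cast_eq_one_iff {q d t : ℕ} (hq : 0 < q) :
    ((q : ZMod d) ^ t = 1) ↔ d ∣ q ^ t - 1 := by
  have h1 : (1 : ℕ) ≤ q ^ t := Nat.one_le_pow _ _ hq
  rw [show ((q : ZMod d) ^ t) = ((q ^ t : ℕ) : ZMod d) by push_cast; ring,
    show (1 : ZMod d) = ((1 : ℕ) : ZMod d) by push_cast; ring,
    ZMod.natCast_eq_natCast_iff]
  constructor
  · intro h; exact (Nat.modEq_iff_dvd' h1).mp h.symm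
  · intro h; exact ((Nat.modEq_iff_dvd' h1).mpr h).symm

lemma ordq_dvd_iff {q d t : ℕ} (hq : 0 < q) :
    ordq q d ∣ t ↔ d ∣ q ^ t - 1 := by
  rw [ordq, orderOf_dvd_iff_pow_eq_one, pow_cast_eq_one_iff hq]

lemma ordq_pos {q d : ℕ} (hq : 0 < q) (hd : 0 < d) (hco : Nat.Coprime q d) :
    0 < ordq q d := by
  apply orderOf_pos_iff.mpr
  rw [isOfFinOrder_iff_pow_eq_one]
  refine ⟨d.totient, Nat.totient_pos.mpr hd, ?_⟩
  rw [pow_cast_eq_one_iff hq]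
  have := Nat.ModEq.pow_totient hco
  exact (Nat.modEq_iff_dvd' (Nat.one_le_pow _ _ hq)).mp this.symm

lemma ordq_self_dvd {q d : ℕ} (hq : 0 < q) : d ∣ q ^ (ordq q d) - 1 :=
  (ordq_dvd_iff hq).mp dvd_rfl
open Finset

lemma fact2_of_mod4 {x : ℕ} (h : x % 4 = 2) : x.factorization 2 = 1 := by
  obtain ⟨y, hy, hyodd⟩ : ∃ y, x = 2 * y ∧ y % 2 = 1 := ⟨x / 2, by omega, by omega⟩
  subst hy
  rw [Nat.factorization_mul (by norm_num) (by omega)]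
  have h2 : Nat.factorization 2 2 = 1 := by
    rw [Nat.Prime.factorization Nat.prime_two]; simp
  have hy0 : Nat.factorization y 2 = 0 :=
    Nat.factorization_eq_zero_of_not_dvd (by omega)
  simp [h2, hy0]

lemma v2_q_sub_one {q : ℕ} (h1 : q % 4 = 3) : (q - 1).factorization 2 = 1 :=
  fact2_of_mod4 (by omega)

lemma pow_mod4_odd {q t : ℕ} (h1 : q % 4 = 3) (ht : Odd t) : q ^ t % 4 = 3 := by
  obtain ⟨s, rfl⟩ := ht
  rw [Nat.pow_mod, h1]
  have h9 : (3:ℕ) ^ (2 * s + 1) = 9 ^ s * 3 := by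
    rw [pow_succ, pow_mul]; norm_num
  rw [show 2*s+1 = s*2+1 by ring] at h9 ⊢
  rw [h9, Nat.mul_mod, Nat.pow_mod]
  norm_num

lemma v2_pow_sub_one_odd {q t : ℕ} (h1 : q % 4 = 3) (ht : Odd t) :
    (q ^ t - 1).factorization 2 = 1 :=
  fact2_of_mod4 (by have := pow_mod4_odd h1 ht; omega)

lemma v2_pow_sub_one_even {q t : ℕ} (h1 : q % 4 = 3) (ht : Even t) (ht0 : t ≠ 0) :
    (q ^ t - 1).factorization 2 = (q + 1).factorization 2 + t.factorization 2 := by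
  have hq3 : 3 ≤ q := by omega
  have key := padicValNat.pow_two_sub_pow (x := q) (y := 1) (by omega) (by omega)
    (by omega) ht0 ht
  simp only [one_pow] at key
  have e1 : (q ^ t - 1).factorization 2 = padicValNat 2 (q ^ t - 1) :=
    Nat.factorization_def _ Nat.prime_two
  have e2 : (q + 1).factorization 2 = padicValNat 2 (q + 1) :=
    Nat.factorization_def _ Nat.prime_two
  have e3 : (q - 1).factorization 2 = padicValNat 2 (q - 1) :=
    Nat.factorization_def _ Nat.prime_two
  have e4 : t.factorization 2 = padicValNat 2 t := Nat.factorization_def _ Nat.prime_two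
  have hv1 : padicValNat 2 (q - 1) = 1 := by rw [← e3]; exact v2_q_sub_one h1
  rw [hv1] at key
  omega

lemma vp_pow_sub_one {q p t : ℕ} (hp : p.Prime) (hodd : Odd p) (hdvd : p ∣ q - 1)
    (hq : 2 ≤ q) (ht : t ≠ 0) :
    (q ^ t - 1).factorization p = (q - 1).factorization p + t.factorization p := by
  haveI : Fact p.Prime := ⟨hp⟩
  have hx : ¬ p ∣ q := by
    intro h
    have h1 : p ∣ q - (q - 1) := Nat.dvd_sub h hdvd
    have : q - (q - 1) = 1 := by omega
    rw [this] at h1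
    exact hp.one_lt.ne' (Nat.eq_one_of_dvd_one h1 ▸ rfl)
  have key := padicValNat.pow_sub_pow (x := q) (y := 1) hodd (by omega) (by omega) hx ht
  simp only [one_pow] at key
  rw [Nat.factorization_def _ hp, Nat.factorization_def _ hp, Nat.factorization_def _ hp]
  exact key
section ord_computations
variable {q : ℕ}

lemma pow_sub_one_ne_zero {q t : ℕ} (hq : 2 ≤ q) (ht : t ≠ 0) : q ^ t - 1 ≠ 0 := by
  have : 2 ^ t ≤ q ^ t := Nat.pow_le_pow_left hq t
  have : 2 ≤ 2 ^ t := Nat.one_lt_two_pow ht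
  omega

/-- order of q mod 2^c for c ≥ 2, when q ≡ 3 mod 4 -/
lemma ordq_two_pow (h1 : q % 4 = 3) {c : ℕ} (hc : 2 ≤ c) :
    ordq q (2 ^ c) = 2 ^ (max 1 (c - (q + 1).factorization 2)) := by
  have hq : 0 < q := by omega
  have hq2 : 2 ≤ q := by omega
  set β := (q + 1).factorization 2 with hβ
  have hβ2 : 2 ≤ β := by
    rw [hβ]
    refine (Nat.Prime.pow_dvd_iff_le_factorization Nat.prime_two (by omega)).mp ?_
    exact (show (2:ℕ)^2 = 4 by norm_num) ▸ (by omega : 4 ∣ q + 1)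
  set s0 := max 1 (c - β) with hs0
  -- step A : ordq ∣ 2 ^ s0
  have hA : ordq q (2 ^ c) ∣ 2 ^ s0 := by
    rw [ordq_dvd_iff hq]
    refine (Nat.Prime.pow_dvd_iff_le_factorization Nat.prime_two
      (pow_sub_one_ne_zero hq2 (by positivity))).mpr ?_
    rw [v2_pow_sub_one_even h1 ⟨2^(s0-1), by
        have : s0 ≠ 0 := by omega
        have : 2^s0 = 2^(s0-1) + 2^(s0-1) := by
          rw [← two_mul, ← pow_succ']
          congr 1; omega
        omega⟩ (by positivity)]
    rw [Nat.Prime.factorization_pow Nat.prime_two]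
    simp only [Finsupp.single_eq_same]
    omega
  obtain ⟨s, hs, hse⟩ := (Nat.dvd_prime_pow Nat.prime_two).mp hA
  -- step C : lower bound on s
  have hC : 2 ^ c ∣ q ^ (ordq q (2 ^ c)) - 1 := ordq_self_dvd hq
  rw [hse] at hC
  have hcle : c ≤ (q ^ (2^s) - 1).factorization 2 :=
    (Nat.Prime.pow_dvd_iff_le_factorization Nat.prime_two
      (pow_sub_one_ne_zero hq2 (by positivity))).mp hC
  have hs1 : 1 ≤ s := by
    by_contra h
    have : s = 0 := by omega
    rw [this] at hcle
    rw [pow_zero, v2_pow_sub_one_odd h1 odd_one] at hcle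
    omega
  rw [v2_pow_sub_one_even h1 ⟨2^(s-1), by
      have : 2^s = 2^(s-1) + 2^(s-1) := by
        rw [← two_mul, ← pow_succ']; congr 1; omega
      omega⟩ (by positivity), Nat.Prime.factorization_pow Nat.prime_two] at hcle
  simp only [Finsupp.single_eq_same] at hcle
  rw [hse]
  congr 1
  have : s ≤ s0 := by
    have := Nat.pow_dvd_pow_iff_le_right (x := 2) (by norm_num) |>.mp (hse ▸ hA)
    exact this
  omega

lemma ordq_two (hodd : q % 2 = 1) : ordq q 2 = 1 := by
  have h : (q : ZMod 2) = 1 := by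
    rw [show (1 : ZMod 2) = ((1:ℕ) : ZMod 2) by norm_num, ZMod.natCast_eq_natCast_iff]
    exact (by omega : q % 2 = 1 % 2)
  rw [ordq, h, orderOf_one]

/-- order of q mod p^c for odd prime p dividing q - 1 -/
lemma ordq_odd_prime_pow {p : ℕ} (hp : p.Prime) (hodd : Odd p) (hdvd : p ∣ q - 1)
    (hq : 2 ≤ q) (c : ℕ) :
    ordq q (p ^ c) = p ^ (c - min c ((q - 1).factorization p)) := by
  have hq0 : 0 < q := by omega
  set v := (q - 1).factorization p with hv
  rcases Nat.eq_zero_or_pos c with rfl | hc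
  · simpa using ordq_one q
  have hv1 : 1 ≤ v := by
    rw [hv]
    exact (Nat.Prime.pow_dvd_iff_le_factorization hp (by omega)).mp (by simpa using hdvd)
  set j0 := c - min c v with hj0
  have hA : ordq q (p ^ c) ∣ p ^ j0 := by
    rw [ordq_dvd_iff hq0]
    refine (Nat.Prime.pow_dvd_iff_le_factorization hp
      (pow_sub_one_ne_zero hq (pow_ne_zero _ hp.ne_zero))).mpr ?_
    rw [vp_pow_sub_one hp hodd hdvd hq (pow_ne_zero _ hp.ne_zero),
      Nat.Prime.factorization_pow hp]
    simp only [Finsupp.single_eq_same]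
    omega
  obtain ⟨j, hj, hje⟩ := (Nat.dvd_prime_pow hp).mp hA
  have hC : p ^ c ∣ q ^ (ordq q (p ^ c)) - 1 := ordq_self_dvd hq0
  rw [hje] at hC
  have hcle : c ≤ (q ^ (p^j) - 1).factorization p :=
    (Nat.Prime.pow_dvd_iff_le_factorization hp
      (pow_sub_one_ne_zero hq (pow_ne_zero _ hp.ne_zero))).mp hC
  rw [vp_pow_sub_one hp hodd hdvd hq (pow_ne_zero _ hp.ne_zero),
    Nat.Prime.factorization_pow hp] at hcle
  simp only [Finsupp.single_eq_same] at hcle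
  rw [hje]
  congr 1
  have hle : j ≤ j0 := Nat.pow_dvd_pow_iff_le_right hp.one_lt |>.mp (hje ▸ hA)
  omega

/-- ordq q (p^c) divides p^c in the relevant cases -/
lemma ordq_two_pow_dvd (h1 : q % 4 = 3) (c : ℕ) : ordq q (2 ^ c) ∣ 2 ^ c := by
  rcases Nat.lt_or_ge c 2 with hc | hc
  · interval_cases c
    · simpa using (ordq_one q).dvd
    · rw [pow_one, ordq_two (by omega)]; exact one_dvd _
  · rw [ordq_two_pow h1 hc]
    apply pow_dvd_pow
    have hβ2 : 2 ≤ (q + 1).factorization 2 := by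
      refine (Nat.Prime.pow_dvd_iff_le_factorization Nat.prime_two (by omega)).mp ?_
      exact (show (2:ℕ)^2 = 4 by norm_num) ▸ (by omega : 4 ∣ q + 1)
    omega

lemma ordq_odd_prime_pow_dvd {p : ℕ} (hp : p.Prime) (hodd : Odd p) (hdvd : p ∣ q - 1)
    (hq : 2 ≤ q) (c : ℕ) : ordq q (p ^ c) ∣ p ^ c := by
  rw [ordq_odd_prime_pow hp hodd hdvd hq c]
  exact pow_dvd_pow _ (by omega)

end ord_computations
-- p4
open Finset

lemma ordq_mul {q d₁ d₂ : ℕ} (hq : 0 < q) (h12 : Nat.Coprime d₁ d₂)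
    (he : Nat.Coprime (ordq q d₁) (ordq q d₂)) :
    ordq q (d₁ * d₂) = ordq q d₁ * ordq q d₂ := by
  apply Nat.dvd_antisymm
  · rw [ordq_dvd_iff hq]
    exact h12.mul_dvd_of_dvd_of_dvd
      ((ordq_dvd_iff hq).mp (dvd_mul_right _ _))
      ((ordq_dvd_iff hq).mp (dvd_mul_left _ _))
  · refine he.mul_dvd_of_dvd_of_dvd ?_ ?_
    · exact (ordq_dvd_iff hq).mpr ((dvd_mul_right d₁ d₂).trans (ordq_self_dvd hq))
    · exact (ordq_dvd_iff hq).mpr ((dvd_mul_left d₂ d₁).trans (ordq_self_dvd hq))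

/-- the local factor function -/
noncomputable def gfun (q p c : ℕ) : ℚ := ((p ^ c).totient : ℚ) / (ordq q (p ^ c) : ℚ)

lemma gfun_zero (q p : ℕ) : gfun q p 0 = 1 := by
  simp [gfun, ordq_one]

/-- Key structural lemma: for divisors `d` of `n` (all of whose prime factors divide
`q-1`, with `q ≡ 3 [MOD 4]`), `ordq q d ∣ d` and `φ(d)/ordq q d` factors as a product
over the prime factorization. -/
lemma ordq_structure {q n : ℕ} (hq3 : q % 4 = 3) (hn : 0 < n)
    (hrad : ∀ p ∈ n.primeFactors, p ∣ q - 1) :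
    ∀ d, d ∣ n → ordq q d ∣ d ∧
      ((d.totient : ℚ) / (ordq q d : ℚ) = ∏ p ∈ d.primeFactors, gfun q p (d.factorization p)) := by
  have hq2 : 2 ≤ q := by omega
  have hq0 : 0 < q := by omega
  intro d
  induction d using Nat.strong_induction_on with
  | _ d IH =>
    intro hdn
    have hd0 : d ≠ 0 := by rintro rfl; exact hn.ne' (Nat.eq_zero_of_zero_dvd hdn)
    rcases eq_or_ne d 1 with rfl | hd1
    · simp [ordq_one, gfun]
    -- decompose d = p^c * d'
    set p := d.minFac with hp_def
    have hp : p.Prime := Nat.minFac_prime hd1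
    set c := d.factorization p with hc_def
    have hc0 : c ≠ 0 := (hp.factorization_pos_of_dvd hd0 d.minFac_dvd).ne'
    set d' := d / p ^ c with hd'_def
    have hdecomp : p ^ c * d' = d := Nat.ordProj_mul_ordCompl_eq_self d p
    have hcop : Nat.Coprime p d' := Nat.coprime_ordCompl hp hd0
    have hcop' : Nat.Coprime (p ^ c) d' := hcop.pow_left c
    have hd'0 : d' ≠ 0 := by
      intro h; rw [h, mul_zero] at hdecomp; exact hd0 hdecomp.symm
    have hd'lt : d' < d := by
      have h1 : 1 < p ^ c := Nat.one_lt_pow hc0 hp.one_lt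
      calc d' < p ^ c * d' := by
              nlinarith [Nat.pos_of_ne_zero hd'0]
        _ = d := hdecomp
    have hd'n : d' ∣ n := (Dvd.intro_left _ hdecomp).trans hdn
    obtain ⟨IH1, IH2⟩ := IH d' hd'lt hd'n
    -- p-specific order divisibility
    have hpn : p ∈ n.primeFactors :=
      Nat.mem_primeFactors.mpr ⟨hp, (d.minFac_dvd).trans hdn, hn.ne'⟩
    have hepc : ordq q (p ^ c) ∣ p ^ c := by
      rcases eq_or_ne p 2 with h2 | hp2
      · rw [h2]; exact ordq_two_pow_dvd hq3 c
      · exact ordq_odd_prime_pow_dvd hp (hp.odd_of_ne_two hp2) (hrad p hpn) hq2 c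
    have hecop : Nat.Coprime (ordq q (p ^ c)) (ordq q d') :=
      Nat.Coprime.coprime_dvd_left hepc (Nat.Coprime.coprime_dvd_right IH1 hcop')
    have hmul : ordq q d = ordq q (p ^ c) * ordq q d' := by
      rw [← hdecomp]; exact ordq_mul hq0 hcop' hecop
    constructor
    · rw [hmul, ← hdecomp]
      exact mul_dvd_mul hepc IH1
    · -- the product formula
      have hpf : d.primeFactors = insert p d'.primeFactors := by
        rw [← hdecomp, (hcop'.primeFactors_mul), Nat.primeFactors_prime_pow hc0 hp]
        rfl
      have hpnotin : p ∉ d'.primeFactors := by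
        intro h
        have h1 : p ∣ d' := (Nat.mem_primeFactors.mp h).2.1
        have h2 : p ∣ Nat.gcd p d' := Nat.dvd_gcd dvd_rfl h1
        rw [hcop] at h2
        exact hp.one_lt.ne' (Nat.eq_one_of_dvd_one h2)
      have hfact : ∀ r ∈ d'.primeFactors, d.factorization r = d'.factorization r := by
        intro r hr
        have hrp : r ≠ p := fun h => hpnotin (h ▸ hr)
        conv_lhs => rw [← hdecomp]
        rw [Nat.factorization_mul (pow_ne_zero _ hp.ne_zero) hd'0]
        simp only [Finsupp.coe_add, Pi.add_apply]
        rw [Nat.Prime.factorization_pow hp, Finsupp.single_apply, if_neg (fun h => hrp h.symm)]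
        omega
      rw [hpf, Finset.prod_insert hpnotin]
      calc (d.totient : ℚ) / (ordq q d : ℚ)
          = ((p^c).totient * d'.totient : ℚ) / ((ordq q (p^c) : ℚ) * (ordq q d' : ℚ)) := by
            rw [hmul]
            conv_lhs => rw [← hdecomp]
            rw [Nat.totient_mul hcop']
            push_cast; ring
        _ = ((p^c).totient / (ordq q (p^c) : ℚ)) * ((d'.totient : ℚ) / (ordq q d' : ℚ)) :=
            (div_mul_div_comm _ _ _ _).symm
        _ = gfun q p (d.factorization p) * ∏ r ∈ d'.primeFactors, gfun q r (d.factorization r) := by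
            rw [IH2]
            have hpc : ∏ r ∈ d'.primeFactors, gfun q r (d.factorization r)
                = ∏ r ∈ d'.primeFactors, gfun q r (d'.factorization r) :=
              Finset.prod_congr rfl (fun r hr => by rw [hfact r hr])
            rw [hpc]
            rfl
-- p5 : arithmetic function machinery
open ArithmeticFunction in
noncomputable def Ffun (q : ℕ) : ArithmeticFunction ℚ :=
  ⟨fun d => if d = 0 then 0 else ∏ p ∈ d.primeFactors, gfun q p (d.factorization p), by simp⟩

lemma Ffun_apply (q : ℕ) {d : ℕ} (hd : d ≠ 0) :
    Ffun q d = ∏ p ∈ d.primeFactors, gfun q p (d.factorization p) := by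
  simp [Ffun, hd]

lemma Ffun_mult (q : ℕ) : (Ffun q).IsMultiplicative := by
  rw [ArithmeticFunction.IsMultiplicative.iff_ne_zero]
  refine ⟨by simp [Ffun], ?_⟩
  intro a b ha hb hab
  rw [Ffun_apply q ha, Ffun_apply q hb, Ffun_apply q (mul_ne_zero ha hb),
    hab.primeFactors_mul, Finset.prod_union hab.disjoint_primeFactors]
  congr 1
  · refine Finset.prod_congr rfl fun p hp => ?_
    have hpb : b.factorization p = 0 := Nat.factorization_eq_zero_of_not_dvd
      (fun h => (Nat.Prime.one_lt (Nat.mem_primeFactors.mp hp).1).ne'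
        (Nat.eq_one_of_dvd_one (hab ▸ Nat.dvd_gcd (Nat.mem_primeFactors.mp hp).2.1 h)))
    rw [Nat.factorization_mul ha hb]
    simp [hpb]
  · refine Finset.prod_congr rfl fun p hp => ?_
    have hpa : a.factorization p = 0 := Nat.factorization_eq_zero_of_not_dvd
      (fun h => (Nat.Prime.one_lt (Nat.mem_primeFactors.mp hp).1).ne'
        (Nat.eq_one_of_dvd_one (hab ▸ Nat.dvd_gcd h (Nat.mem_primeFactors.mp hp).2.1)))
    rw [Nat.factorization_mul ha hb]
    simp [hpa]

lemma Ffun_prime_pow (q : ℕ) {p : ℕ} (hp : p.Prime) (c : ℕ) :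
    Ffun q (p ^ c) = gfun q p c := by
  rcases eq_or_ne c 0 with rfl | hc
  · rw [pow_zero, gfun_zero]
    simpa using (Ffun_mult q).1
  · rw [Ffun_apply q (pow_ne_zero _ hp.ne_zero), Nat.primeFactors_prime_pow hc hp,
      Finset.prod_singleton, Nat.Prime.factorization_pow hp]
    simp

open ArithmeticFunction ArithmeticFunction.zeta in
lemma sum_divisors_Ffun {q n : ℕ} (hn : n ≠ 0) :
    ∑ d ∈ n.divisors, Ffun q d
      = ∏ p ∈ n.primeFactors, ∑ c ∈ Finset.range (n.factorization p + 1), gfun q p c := by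
  have hmult : ((ζ : ArithmeticFunction ℚ) * Ffun q).IsMultiplicative :=
    (isMultiplicative_zeta.natCast).mul (Ffun_mult q)
  have h1 : ∑ d ∈ n.divisors, Ffun q d = ((ζ : ArithmeticFunction ℚ) * Ffun q) n :=
    (coe_zeta_mul_apply).symm
  rw [h1, hmult.multiplicative_factorization _ hn,
    Nat.prod_factorization_eq_prod_primeFactors]
  refine Finset.prod_congr rfl fun p hp => ?_
  have hpp : p.Prime := Nat.prime_of_mem_primeFactors hp
  rw [coe_zeta_mul_apply, Nat.sum_divisors_prime_pow hpp]
  exact Finset.sum_congr rfl fun c _ => Ffun_prime_pow q hpp c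

/-- Main arithmetic reduction -/
lemma sum_phi_div_ord {q n : ℕ} (hq3 : q % 4 = 3) (hn : 0 < n)
    (hrad : ∀ p ∈ n.primeFactors, p ∣ q - 1) :
    ∑ d ∈ n.divisors, ((d.totient : ℚ) / (ordq q d : ℚ))
      = ∏ p ∈ n.primeFactors, ∑ c ∈ Finset.range (n.factorization p + 1), gfun q p c := by
  rw [← sum_divisors_Ffun hn.ne']
  refine Finset.sum_congr rfl fun d hd => ?_
  have hdn := (Nat.mem_divisors.mp hd).1
  rw [(ordq_structure hq3 hn hrad d hdn).2, Ffun_apply q (Nat.pos_of_mem_divisors hd).ne']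
-- p6 : local sums
open Finset

lemma geom_sum_q (x : ℚ) (w : ℕ) :
    ∑ j ∈ range w, x ^ j * (x - 1) = x ^ w - 1 := by
  rw [← Finset.sum_mul, geom_sum_mul]

lemma sum_gfun_odd {q p : ℕ} (hp : p.Prime) (hodd : Odd p) (hdvd : p ∣ q - 1)
    (hq : 2 ≤ q) (A : ℕ) :
    ∑ c ∈ range (A + 1), gfun q p c
      = (p : ℚ) ^ (min A ((q - 1).factorization p))
        * (1 + ((A - min A ((q - 1).factorization p) : ℕ) : ℚ) * ((p : ℚ) - 1) / p) := by
  set v := (q - 1).factorization p with hv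
  have hv1 : 1 ≤ v := by
    rw [hv]
    exact (Nat.Prime.pow_dvd_iff_le_factorization hp (by omega)).mp (by simpa using hdvd)
  have hp2 : 2 ≤ p := hp.two_le
  have hpQ : (1:ℚ) < (p:ℚ) := by exact_mod_cast hp.one_lt
  have hpQ0 : (p:ℚ) ≠ 0 := by positivity
  set w := min A v with hw
  have hwA : w ≤ A := min_le_left _ _
  -- value of gfun in the two regimes
  have hg_low : ∀ c, 1 ≤ c → c ≤ v → gfun q p c = (p:ℚ)^(c-1) * ((p:ℚ) - 1) := by
    intro c h1 h2
    rw [gfun, ordq_odd_prime_pow hp hodd hdvd hq c, Nat.totient_prime_pow hp (by omega)]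
    have : c - min c v = 0 := by omega
    rw [this, pow_zero, Nat.cast_one, div_one]
    push_cast [Nat.cast_sub (by omega : 1 ≤ p)]
    ring
  have hg_high : ∀ c, v < c → gfun q p c = (p:ℚ)^(v-1) * ((p:ℚ) - 1) := by
    intro c hcv
    rw [gfun, ordq_odd_prime_pow hp hodd hdvd hq c, Nat.totient_prime_pow hp (by omega)]
    have h1 : c - min c v = c - v := by omega
    rw [h1]
    push_cast [Nat.cast_sub (by omega : 1 ≤ p)]
    rw [div_eq_iff (by positivity : ((p:ℚ)^(c-v)) ≠ 0)]
    rw [show (p:ℚ)^(c-1) = (p:ℚ)^(v-1) * (p:ℚ)^(c-v) by rw [← pow_add]; congr 1; omega]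
    ring
  -- split the sum
  have hsplit : range (A+1) = range (w+1) ∪ Ico (w+1) (A+1) := by
    rw [range_eq_Ico, range_eq_Ico, Finset.Ico_union_Ico_eq_Ico (by omega) (by omega)]
  rw [hsplit, Finset.sum_union (by
    rw [range_eq_Ico]
    exact Finset.Ico_disjoint_Ico_consecutive 0 (w+1) (A+1))]
  have hsum1 : ∑ c ∈ range (w+1), gfun q p c = (p:ℚ)^w := by
    rw [Finset.sum_range_succ']
    rw [Finset.sum_congr rfl (fun j hj => hg_low (j+1) (by omega)
      (by have := Finset.mem_range.mp hj; omega))]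
    simp only [Nat.add_sub_cancel, gfun_zero]
    rw [geom_sum_q]
    ring
  rw [hsum1]
  rcases le_or_gt A v with hAv | hAv
  · have hwA' : w = A := by omega
    rw [hwA']
    simp [Finset.Ico_self]
  · have hwv : w = v := by omega
    have hsum2 : ∑ c ∈ Ico (w+1) (A+1), gfun q p c
        = ((A - w : ℕ) : ℚ) * ((p:ℚ)^(v-1) * ((p:ℚ) - 1)) := by
      rw [Finset.sum_congr rfl (fun c hc => hg_high c (by
        have := Finset.mem_Ico.mp hc; omega))]
      rw [Finset.sum_const, Nat.card_Ico, nsmul_eq_mul]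
      congr 2
      omega
    rw [hsum2, hwv]
    have hps : (p:ℚ)^v = (p:ℚ)^(v-1) * p := by
      rw [← pow_succ]; congr 1; omega
    field_simp
    rw [hps]
    ring
-- p7 : 2-adic local sum
lemma sum_gfun_two {q : ℕ} (hq3 : q % 4 = 3) {a : ℕ} (ha : 3 ≤ a) :
    ∑ c ∈ Finset.range (a + 1), gfun q 2 c
      = 1 + (2:ℚ) ^ (min (a-1) ((q+1).factorization 2) - 1)
          * (2 + ((a - min a ((q+1).factorization 2 + 1) : ℕ) : ℚ)) := by
  set β := (q+1).factorization 2 with hβ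
  have hβ2 : 2 ≤ β := by
    rw [hβ]
    refine (Nat.Prime.pow_dvd_iff_le_factorization Nat.prime_two (by omega)).mp ?_
    exact (show (2:ℕ)^2 = 4 by norm_num) ▸ (by omega : 4 ∣ q + 1)
  have hg0 : gfun q 2 0 = 1 := gfun_zero q 2
  have hg1 : gfun q 2 1 = 1 := by
    rw [gfun, pow_one, ordq_two (by omega), Nat.totient_two]
    norm_num
  have hg_low : ∀ c, 2 ≤ c → c ≤ β + 1 → gfun q 2 c = (2:ℚ)^(c-2) := by
    intro c h1 h2
    rw [gfun, ordq_two_pow hq3 h1, Nat.totient_prime_pow Nat.prime_two (by omega)]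
    have : max 1 (c - β) = 1 := by omega
    rw [this, pow_one]
    push_cast
    rw [mul_one, show (2:ℚ)^(c-1) = (2:ℚ)^(c-2) * 2 by rw [← pow_succ]; congr 1; omega]
    ring
  have hg_high : ∀ c, β + 2 ≤ c → gfun q 2 c = (2:ℚ)^(β-1) := by
    intro c h1
    rw [gfun, ordq_two_pow hq3 (by omega), Nat.totient_prime_pow Nat.prime_two (by omega)]
    have : max 1 (c - β) = c - β := by omega
    rw [this]
    push_cast
    rw [div_eq_iff (by positivity : ((2:ℚ)^(c-β)) ≠ 0)]
    rw [show (2:ℚ)^(c-1) = (2:ℚ)^(β-1) * 2^(c-β) by rw [← pow_add]; congr 1; omega]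
    ring
  set w := min a (β+1) with hw
  have hw2 : 2 ≤ w := by omega
  have hwa : w ≤ a := by omega
  have hsplit1 : Finset.range (a+1) = Finset.range (w+1) ∪ Finset.Ico (w+1) (a+1) := by
    rw [Finset.range_eq_Ico, Finset.range_eq_Ico, Finset.Ico_union_Ico_eq_Ico (by omega) (by omega)]
  have hsplit2 : Finset.range (w+1) = Finset.range 2 ∪ Finset.Ico 2 (w+1) := by
    rw [Finset.range_eq_Ico, Finset.range_eq_Ico, Finset.Ico_union_Ico_eq_Ico (by omega) (by omega)]
  rw [hsplit1, Finset.sum_union (by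
    rw [Finset.range_eq_Ico]
    exact Finset.Ico_disjoint_Ico_consecutive 0 (w+1) (a+1))]
  rw [hsplit2, Finset.sum_union (by
    rw [Finset.range_eq_Ico]
    exact Finset.Ico_disjoint_Ico_consecutive 0 2 (w+1))]
  have hs0 : ∑ c ∈ Finset.range 2, gfun q 2 c = 2 := by
    rw [Finset.sum_range_succ, Finset.sum_range_one, hg0, hg1]
    norm_num
  have hs1 : ∑ c ∈ Finset.Ico 2 (w+1), gfun q 2 c = (2:ℚ)^(w-1) - 1 := by
    rw [Finset.sum_Ico_eq_sum_range]
    rw [Finset.sum_congr rfl (fun j hj => by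
      rw [hg_low (2+j) (by omega) (by have := Finset.mem_range.mp hj; omega)])]
    simp only [show ∀ j:ℕ, 2+j-2 = j from fun j => by omega]
    rw [show w+1-2 = w-1 by omega]
    have := geom_sum_q 2 (w-1)
    norm_num at this
    rw [this]
  have hs2 : ∑ c ∈ Finset.Ico (w+1) (a+1), gfun q 2 c
      = ((a - w : ℕ) : ℚ) * (2:ℚ)^(β-1) := by
    rcases le_or_gt a (β+1) with hcase | hcase
    · have : w = a := by omega
      rw [this]
      simp [Finset.Ico_self]
    · have hwβ : w = β+1 := by omega
      rw [Finset.sum_congr rfl (fun c hc => hg_high c (by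
        have := Finset.mem_Ico.mp hc; omega))]
      rw [Finset.sum_const, Nat.card_Ico, nsmul_eq_mul]
      congr 2
      omega
  rw [hs0, hs1, hs2]
  -- now pure case analysis
  rcases le_or_gt a (β+1) with hcase | hcase
  · have hwa' : w = a := by omega
    have hr : min (a-1) β = a-1 := by omega
    rw [hwa', hr, Nat.sub_self]
    rw [show (2:ℚ)^(a-1) = (2:ℚ)^(a-1-1) * 2 by rw [← pow_succ]; congr 1; omega]
    push_cast
    ring
  · have hwβ : w = β+1 := by omega
    have hr : min (a-1) β = β := by omega
    rw [hwβ, hr]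
    rw [show (2:ℚ)^(β+1-1) = (2:ℚ)^(β-1) * 2 by rw [← pow_succ]; congr 1; omega]
    push_cast
    ring
-- p8 : the degree of the minimal polynomial of a root of unity over a finite field
open Polynomial IntermediateField

lemma minpoly_natDegree_eq_ordq {F K : Type*} [Field F] [Fintype F] [Field K] [Algebra F K]
    [FiniteDimensional F K] (q : ℕ) (hq : q = Fintype.card F) {z : K} {d : ℕ}
    (hzd : orderOf z = d) (hd : 0 < d) :
    (minpoly F z).natDegree = ordq q d := by
  classical
  have hq2 : 2 ≤ q := hq ▸ Fintype.one_lt_card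
  have hq0 : 0 < q := by omega
  haveI : Finite K := Module.finite_of_finite F
  haveI : Fintype K := Fintype.ofFinite K
  have hint : IsIntegral F z := IsIntegral.of_finite F z
  set t := (minpoly F z).natDegree with ht_def
  have ht0 : 0 < t := minpoly.natDegree_pos hint
  set L := F⟮z⟯ with hL
  haveI : Fintype L := Fintype.ofFinite _
  have hfinrank : Module.finrank F L = t := adjoin.finrank hint
  have hcardL : Fintype.card L = q ^ t := by
    rw [hq, Module.card_eq_pow_finrank (K := F) (V := L), hfinrank]
  -- the generator has order d in L
  set zL := AdjoinSimple.gen F z with hzL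
  have hordL : orderOf zL = d := by
    rw [← hzd]
    exact (orderOf_injective (L.val.toRingHom.toMonoidHom)
      (fun a b hab => Subtype.ext hab) zL).symm
  -- step 1 : ordq q d ∣ t
  have hzLpow : zL ^ d = 1 := hordL ▸ pow_orderOf_eq_one zL
  obtain ⟨u, hu⟩ := IsUnit.of_pow_eq_one hzLpow hd.ne'
  have hordu : orderOf u = d := by
    rw [← hordL, ← hu, orderOf_units]
  have hdvd_card : d ∣ q ^ t - 1 := by
    rw [← hordu, ← hcardL, ← Fintype.card_units]
    exact orderOf_dvd_card
  have dir1 : ordq q d ∣ t := (ordq_dvd_iff hq0).mpr hdvd_card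
  -- step 2 : t ≤ ordq q d
  set s := ordq q d with hs
  have hs0 : 0 < s := Nat.pos_of_dvd_of_pos dir1 ht0
  have hds : d ∣ q ^ s - 1 := ordq_self_dvd hq0
  have hzs : z ^ q ^ s = z := by
    have h1 : z ^ (q ^ s - 1) = 1 := by
      rw [← hzd] at hds
      exact orderOf_dvd_iff_pow_eq_one.mp hds
    calc z ^ q ^ s = z ^ (q ^ s - 1) * z := by
          rw [← pow_succ]; congr 1
          have : 1 ≤ q ^ s := Nat.one_le_pow _ _ hq0
          omega
      _ = z := by rw [h1, one_mul]
  -- Frobenius setup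
  set p := ringChar F with hp_def
  haveI hcharF : CharP F p := ringChar.charP F
  have hpprime : p.Prime := CharP.char_is_prime F p
  haveI : CharP K p := charP_of_injective_algebraMap (algebraMap F K).injective p
  haveI : ExpChar K p := ExpChar.prime hpprime
  obtain ⟨k, hk, hcard⟩ := FiniteField.card F p
  have hqpk : q = p ^ (k : ℕ) := hq ▸ hcard
  have hqs : q ^ s = p ^ ((k : ℕ) * s) := by rw [hqpk, ← pow_mul]
  -- the algebra endomorphism x ↦ x^(q^s)
  have hcomm : ∀ c : F, (iterateFrobenius K p ((k : ℕ) * s)) (algebraMap F K c)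
      = algebraMap F K c := by
    intro c
    rw [iterateFrobenius_def, ← map_pow, ← hqs, hq, FiniteField.pow_card_pow]
  set ψ : K →ₐ[F] K := ⟨iterateFrobenius K p ((k : ℕ) * s), hcomm⟩ with hψ
  set A := AlgHom.equalizer ψ (AlgHom.id F K) with hA
  have hzA : z ∈ A := by
    show ψ z = (AlgHom.id F K) z
    simp only [hψ, AlgHom.coe_mk, iterateFrobenius_def, AlgHom.coe_id, id_eq]
    rw [← hqs]
    exact hzs
  have hLsub : ∀ w : K, w ∈ L → w ∈ A := by
    intro w hw
    have h1 : L.toSubalgebra = Algebra.adjoin F {z} :=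
      adjoin_simple_toSubalgebra_of_isAlgebraic hint.isAlgebraic
    have h2 : Algebra.adjoin F {z} ≤ A := Algebra.adjoin_le (by
      intro x hx
      rw [Set.mem_singleton_iff] at hx
      rw [hx]; exact hzA)
    exact h2 (h1 ▸ hw)
  -- roots bound
  set Φ : K[X] := X ^ (q ^ s) - X with hΦ
  have hΦ0 : Φ ≠ 0 := by
    intro h
    have h2 : Φ.coeff (q ^ s) = 1 := by
      have hne : q ^ s ≠ 1 := by
        have : 2 ≤ q ^ s := by
          calc 2 = 2^1 := (pow_one 2).symm
          _ ≤ q ^ s := Nat.pow_le_pow_left hq2 1 |>.trans (Nat.pow_le_pow_right (by omega) hs0)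
        omega
      simp [hΦ, coeff_X_pow, coeff_X, hne, Ne.symm hne]
    rw [h] at h2
    simp at h2
  have hΦdeg : Φ.natDegree = q ^ s := by
    have h2 : (2:ℕ) ≤ q ^ s := by
      calc (2:ℕ) = 2^1 := (pow_one 2).symm
      _ ≤ q ^ s := Nat.pow_le_pow_left hq2 1 |>.trans (Nat.pow_le_pow_right (by omega) hs0)
    have hdeg : Φ.degree = (q ^ s : ℕ) := by
      rw [hΦ]
      rw [degree_sub_eq_left_of_degree_lt]
      · exact degree_X_pow _
      · rw [degree_X_pow, degree_X]
        exact_mod_cast (by omega : (1:ℕ) < q ^ s)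
    exact natDegree_eq_of_degree_eq_some hdeg
  -- every element of L is a root of Φ
  have hLroots : ∀ w : K, w ∈ L → w ∈ Φ.roots.toFinset := by
    intro w hw
    rw [Multiset.mem_toFinset, mem_roots hΦ0]
    have hwA := hLsub w hw
    have : ψ w = w := hwA
    simp only [hψ, AlgHom.coe_mk, iterateFrobenius_def] at this
    rw [← hqs] at this
    simp [hΦ, IsRoot, this]
  -- cardinality comparison
  have hcard_le : Fintype.card L ≤ q ^ s := by
    have hinj : Function.Injective (fun w : L => (⟨(w : K), hLroots w w.2⟩ :
        {x // x ∈ Φ.roots.toFinset})) := by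
      intro a b hab
      have := congrArg Subtype.val hab
      exact Subtype.ext this
    calc Fintype.card L ≤ Fintype.card {x // x ∈ Φ.roots.toFinset} :=
          Fintype.card_le_of_injective _ hinj
      _ = Φ.roots.toFinset.card := Fintype.card_coe _
      _ ≤ Multiset.card Φ.roots := Multiset.toFinset_card_le _
      _ ≤ Φ.natDegree := Φ.card_roots'
      _ = q ^ s := hΦdeg
  have dir2 : t ≤ s := by
    rw [hcardL] at hcard_le
    exact (Nat.pow_le_pow_iff_right hq2).mp hcard_le
  have : s ≤ t := Nat.le_of_dvd ht0 dir1
  omega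
-- p9 : the counting theorem
open Polynomial

lemma cyclo_unique {F : Type*} [Field F] {n : ℕ} (hn : 0 < n)
    (hsq : Squarefree (X ^ n - 1 : F[X])) {d₁ d₂ : ℕ} (h1 : d₁ ∈ n.divisors)
    (h2 : d₂ ∈ n.divisors) {f : F[X]} (hf : Irreducible f)
    (hfd1 : f ∣ cyclotomic d₁ F) (hfd2 : f ∣ cyclotomic d₂ F) : d₁ = d₂ := by
  by_contra hne
  have hdvd : f * f ∣ (X ^ n - 1 : F[X]) := by
    have h3 : cyclotomic d₂ F ∣ ∏ d ∈ n.divisors.erase d₁, cyclotomic d F :=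
      Finset.dvd_prod_of_mem _ (Finset.mem_erase.mpr ⟨Ne.symm hne, h2⟩)
    have h4 : f * f ∣ cyclotomic d₁ F * ∏ d ∈ n.divisors.erase d₁, cyclotomic d F :=
      mul_dvd_mul hfd1 (hfd2.trans h3)
    have h5 : cyclotomic d₁ F * ∏ d ∈ n.divisors.erase d₁, cyclotomic d F
        = X ^ n - 1 :=
      (Finset.mul_prod_erase n.divisors (fun d => cyclotomic d F) h1).trans
        (prod_cyclotomic_eq_X_pow_sub_one hn F)
    exact h5 ▸ h4
  exact hf.not_isUnit (hsq f hdvd)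

theorem count_irreducible_factors {F : Type*} [Field F] [Fintype F] (q n : ℕ)
    (hq : q = Fintype.card F) (hn : 0 < n) (hco : Nat.Coprime q n) :
    ({f : Polynomial F | f.Monic ∧ Irreducible f ∧ f ∣ (X ^ n - 1 : Polynomial F)}.ncard : ℚ)
      = ∑ d ∈ n.divisors, ((d.totient : ℚ) / (ordq q d : ℚ)) := by
  classical
  have hq2 : 2 ≤ q := hq ▸ Fintype.one_lt_card
  -- characteristic does not divide n
  have hnF : (n : F) ≠ 0 := by
    intro h
    set p := ringChar F with hp_def
    haveI : CharP F p := ringChar.charP F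
    have hpprime : p.Prime := CharP.char_is_prime F p
    have hpn : p ∣ n := (CharP.cast_eq_zero_iff F p n).mp h
    obtain ⟨k, hk, hcard⟩ := FiniteField.card F p
    have hpq : p ∣ q := by
      rw [hq, hcard]
      exact dvd_pow_self p (by positivity)
    have : p ∣ 1 := hco ▸ Nat.dvd_gcd hpq hpn
    exact hpprime.one_lt.ne' (Nat.eq_one_of_dvd_one this)
  set P : F[X] := X ^ n - 1 with hP_def
  have hP1 : P = X ^ n - C 1 := by rw [hP_def, C_1]
  have hPsep : P.Separable := by
    rw [hP1]; exact separable_X_pow_sub_C 1 hnF one_ne_zero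
  have hPmonic : P.Monic := by rw [hP1]; exact monic_X_pow_sub_C _ hn.ne'
  have hP0 : P ≠ 0 := hPmonic.ne_zero
  have hPdeg : P.natDegree = n := by rw [hP1]; exact natDegree_X_pow_sub_C
  haveI : Fact (P ≠ 0) := ⟨hP0⟩
  set K := P.SplittingField with hK_def
  have hsplits : Splits (P.map (algebraMap F K)) := SplittingField.splits P
  haveI : Finite K := Module.finite_of_finite F
  haveI : Fintype K := Fintype.ofFinite K
  set i : F →+* K := algebraMap F K with hi_def
  set PK : K[X] := P.map i with hPK_def
  have hPK : PK = X ^ n - 1 := by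
    show Polynomial.map i (X ^ n - 1 : F[X]) = X ^ n - 1
    rw [Polynomial.map_sub, Polynomial.map_pow, map_X, Polynomial.map_one]
  have hPK0 : PK ≠ 0 := Polynomial.map_ne_zero hP0
  have hPKsep : PK.Separable := hPsep.map
  have hnodup : PK.roots.Nodup := nodup_roots hPKsep
  set R : Finset K := PK.roots.toFinset with hR_def
  have hRcard : R.card = n := by
    rw [hR_def, Multiset.toFinset_card_of_nodup hnodup, ← hsplits.natDegree_eq_card_roots,
      hPK_def, natDegree_map, hPdeg]
  have hmemR : ∀ z : K, z ∈ R ↔ z ^ n = 1 := by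
    intro z
    rw [hR_def, Multiset.mem_toFinset, mem_roots hPK0, IsRoot, hPK]
    simp [sub_eq_zero]
  have horder_pos : ∀ z ∈ R, 0 < orderOf z := by
    intro z hz
    exact (isOfFinOrder_iff_pow_eq_one.mpr ⟨n, hn, (hmemR z).mp hz⟩).orderOf_pos
  have horder_dvd : ∀ z ∈ R, orderOf z ∣ n := by
    intro z hz
    exact orderOf_dvd_iff_pow_eq_one.mpr ((hmemR z).mp hz)
  -- integrality
  have hint : ∀ z : K, IsIntegral F z := fun z => IsIntegral.of_finite F z
  -- the set is the image of the roots under minpoly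
  set Φ : K → F[X] := fun z => minpoly F z with hΦ_def
  have hEset : {f : Polynomial F | f.Monic ∧ Irreducible f ∧ f ∣ P}
      = ↑(R.image Φ) := by
    ext f
    simp only [Set.mem_setOf_eq, Finset.coe_image, Set.mem_image, Finset.mem_coe]
    constructor
    · rintro ⟨hm, hirr, hdvd⟩
      have hfsplits : Splits (f.map i) := Splits.of_dvd hsplits hPK0 (Polynomial.map_dvd i hdvd)
      obtain ⟨z, hz⟩ := Splits.exists_eval_eq_zero hfsplits
        (by rw [degree_map]; exact degree_ne_of_natDegree_ne hirr.natDegree_pos.ne')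
      rw [← eval₂_eq_eval_map] at hz
      have hzR : z ∈ R := by
        rw [hR_def, Multiset.mem_toFinset, mem_roots hPK0, IsRoot, hPK_def, ← eval₂_eq_eval_map]
        obtain ⟨g, hg⟩ := hdvd
        rw [congrArg (eval₂ i z) hg, eval₂_mul, hz, zero_mul]
      refine ⟨z, hzR, ?_⟩
      rw [hΦ_def]
      exact (minpoly.eq_of_irreducible_of_monic hirr (by
        rwa [aeval_def]) hm).symm
    · rintro ⟨z, hzR, rfl⟩
      refine ⟨minpoly.monic (hint z), minpoly.irreducible (hint z), minpoly.dvd F z ?_⟩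
      show (aeval z) ((X : F[X]) ^ n - 1) = 0
      rw [map_sub, map_pow, aeval_X, map_one, (hmemR z).mp hzR, sub_self]
  rw [hEset, Set.ncard_coe_finset]
  -- cyclotomic divisibility
  have hsqfree : Squarefree P := hPsep.squarefree
  have hcyclo : ∀ z ∈ R, Φ z ∣ cyclotomic (orderOf z) F := by
    intro z hz
    apply minpoly.dvd
    have hprim : IsPrimitiveRoot z (orderOf z) := IsPrimitiveRoot.orderOf z
    have hroot : (cyclotomic (orderOf z) K).IsRoot z :=
      hprim.isRoot_cyclotomic (horder_pos z hz)
    rw [aeval_def, eval₂_eq_eval_map, map_cyclotomic]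
    exact hroot
  -- partition of the image by order of roots
  have hpart : R.image Φ
      = n.divisors.biUnion (fun d => (R.filter (fun z => orderOf z = d)).image Φ) := by
    ext f
    simp only [Finset.mem_image, Finset.mem_biUnion, Finset.mem_filter]
    constructor
    · rintro ⟨z, hz, rfl⟩
      exact ⟨orderOf z, Nat.mem_divisors.mpr ⟨horder_dvd z hz, hn.ne'⟩, z, ⟨hz, rfl⟩, rfl⟩
    · rintro ⟨d, _, z, ⟨hz, _⟩, rfl⟩
      exact ⟨z, hz, rfl⟩
  rw [hpart, Finset.card_biUnion (by
    intro d₁ h1 d₂ h2 hne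
    rw [Function.onFun, Finset.disjoint_left]
    rintro f hf1 hf2
    obtain ⟨z₁, hz₁, hfz₁⟩ := Finset.mem_image.mp hf1
    obtain ⟨z₂, hz₂, hfz₂⟩ := Finset.mem_image.mp hf2
    obtain ⟨hz₁R, hz₁d⟩ := Finset.mem_filter.mp hz₁
    obtain ⟨hz₂R, hz₂d⟩ := Finset.mem_filter.mp hz₂
    apply hne
    refine cyclo_unique hn hsqfree h1 h2 (f := f) ?_ ?_ ?_
    · rw [← hfz₁]; exact minpoly.irreducible (hint z₁)
    · rw [← hfz₁, ← hz₁d]; exact hcyclo z₁ hz₁R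
    · rw [← hfz₂, ← hz₂d]; exact hcyclo z₂ hz₂R)]
  push_cast
  refine Finset.sum_congr rfl fun d hd => ?_
  -- now the per-divisor count
  have hd_dvd : d ∣ n := (Nat.mem_divisors.mp hd).1
  have hd_pos : 0 < d := Nat.pos_of_mem_divisors hd
  set R_d := R.filter (fun z => orderOf z = d) with hRd_def
  -- n divides the order of Kˣ
  have hN : n ∣ Fintype.card Kˣ := by
    set N := Fintype.card Kˣ with hN_def
    set g := Nat.gcd n N with hg_def
    have hg_pos : 0 < g := Nat.gcd_pos_of_pos_left _ hn
    have hsub : R ⊆ (nthRoots g (1 : K)).toFinset := by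
      intro z hz
      rw [Multiset.mem_toFinset, mem_nthRoots hg_pos]
      have h1 : orderOf z ∣ n := horder_dvd z hz
      have h2 : orderOf z ∣ N := by
        have hzu : IsUnit z := IsUnit.of_pow_eq_one ((hmemR z).mp hz) hn.ne'
        obtain ⟨u, rfl⟩ := hzu
        rw [orderOf_units]
        exact orderOf_dvd_card
      exact orderOf_dvd_iff_pow_eq_one.mp (Nat.dvd_gcd h1 h2)
    have hle : n ≤ g := by
      calc n = R.card := hRcard.symm
        _ ≤ (nthRoots g (1 : K)).toFinset.card := Finset.card_le_card hsub
        _ ≤ Multiset.card (nthRoots g (1 : K)) := Multiset.toFinset_card_le _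
        _ ≤ g := card_nthRoots g 1
    have hge : g ∣ n := Nat.gcd_dvd_left _ _
    have h5 : g = n := Nat.le_antisymm (Nat.le_of_dvd hn hge) hle
    rw [← h5]
    exact Nat.gcd_dvd_right _ _
  -- (A) : the number of roots of order d is φ(d)
  have hRd_card : R_d.card = d.totient := by
    have hdN : d ∣ Fintype.card Kˣ := hd_dvd.trans hN
    have himg : R_d = (Finset.univ.filter (fun u : Kˣ => orderOf u = d)).image
        (fun u : Kˣ => (u : K)) := by
      ext z
      simp only [hRd_def, Finset.mem_filter, Finset.mem_image, Finset.mem_univ, true_and]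
      constructor
      · rintro ⟨hzR, hzd⟩
        obtain ⟨u, rfl⟩ := IsUnit.of_pow_eq_one ((hmemR z).mp hzR) hn.ne'
        exact ⟨u, by rw [← orderOf_units, hzd], rfl⟩
      · rintro ⟨u, hu, rfl⟩
        have ho : orderOf (u : K) = d := by rw [orderOf_units, hu]
        refine ⟨(hmemR _).mpr ?_, ho⟩
        exact orderOf_dvd_iff_pow_eq_one.mp (ho ▸ hd_dvd)
    rw [himg, Finset.card_image_of_injective _ Units.val_injective,
      IsCyclic.card_orderOf_eq_totient hdN]
  -- (B) : fibers of minpoly over R_d have size ordq q d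
  have hfib : ∀ f ∈ R_d.image Φ, (R_d.filter (fun z => Φ z = f)).card = ordq q d := by
    intro f hf
    obtain ⟨z₀, hz₀, rfl⟩ := Finset.mem_image.mp hf
    obtain ⟨hz₀R, hz₀d⟩ := Finset.mem_filter.mp hz₀
    have hf_irr : Irreducible (Φ z₀) := minpoly.irreducible (hint z₀)
    have hf_monic : (Φ z₀).Monic := minpoly.monic (hint z₀)
    have hf_dvdP : Φ z₀ ∣ P := minpoly.dvd F z₀ (by
      show (aeval z₀) ((X : F[X]) ^ n - 1) = 0
      rw [map_sub, map_pow, aeval_X, map_one, (hmemR z₀).mp hz₀R, sub_self])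
    have hf0 : Φ z₀ ≠ 0 := hf_monic.ne_zero
    have hfK0 : (Φ z₀).map i ≠ 0 := Polynomial.map_ne_zero hf0
    have hfsep : (Φ z₀).Separable := hPsep.of_dvd hf_dvdP
    have hfsplits : Splits ((Φ z₀).map i) := Splits.of_dvd hsplits hPK0 (Polynomial.map_dvd i hf_dvdP)
    have hfiber_eq : R_d.filter (fun z => Φ z = Φ z₀) = ((Φ z₀).map i).roots.toFinset := by
      ext w
      simp only [Finset.mem_filter, Multiset.mem_toFinset, mem_roots hfK0, IsRoot, hRd_def]
      constructor
      · rintro ⟨⟨hwR, hwd⟩, hwf⟩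
        rw [← eval₂_eq_eval_map, ← aeval_def, ← hwf]
        exact minpoly.aeval F w
      · intro hw
        have haev : (aeval w) (Φ z₀) = 0 := by
          rw [aeval_def, eval₂_eq_eval_map]; exact hw
        have hwminpoly : Φ w = Φ z₀ :=
          (minpoly.eq_of_irreducible_of_monic hf_irr haev hf_monic).symm
        have hwR : w ∈ R := by
          rw [hR_def, Multiset.mem_toFinset, mem_roots hPK0, IsRoot, hPK_def,
            ← eval₂_eq_eval_map]
          obtain ⟨g, hg⟩ := hf_dvdP
          rw [congrArg (eval₂ i w) hg, eval₂_mul, eval₂_eq_eval_map, hw, zero_mul]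
        have hwd : orderOf w = d := by
          have h1 : orderOf w ∈ n.divisors :=
            Nat.mem_divisors.mpr ⟨horder_dvd w hwR, hn.ne'⟩
          refine cyclo_unique hn hsqfree h1 hd (f := Φ z₀) hf_irr ?_ ?_
          · rw [← hwminpoly]; exact hcyclo w hwR
          · rw [← hz₀d]; exact hcyclo z₀ hz₀R
        exact ⟨⟨hwR, hwd⟩, hwminpoly⟩
    rw [hfiber_eq, Multiset.toFinset_card_of_nodup (nodup_roots hfsep.map),
      ← hfsplits.natDegree_eq_card_roots, natDegree_map]
    exact minpoly_natDegree_eq_ordq q hq hz₀d hd_pos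
  -- combine : φ(d) = (number of minpolys) * ordq q d
  have hcount : d.totient = (R_d.image Φ).card * ordq q d := by
    rw [← hRd_card, Finset.card_eq_sum_card_image Φ R_d]
    rw [Finset.sum_congr rfl hfib, Finset.sum_const, smul_eq_mul]
  have hord_ne : (ordq q d : ℚ) ≠ 0 := by
    have htot : d.totient ≠ 0 := (Nat.totient_pos.mpr hd_pos).ne'
    intro h
    rw [Nat.cast_eq_zero] at h
    rw [h, mul_zero] at hcount
    exact htot hcount
  rw [eq_div_iff hord_ne]
  exact_mod_cast congrArg (Nat.cast (R := ℚ)) hcount.symm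

/-- If `q ≡ 3 (mod 4)`, `8 ∣ n` and `rad(n) ∣ q - 1`, then with
`m = n / gcd(n, q² - 1)` and `r = min(ν₂(n/2), ν₂(q+1))`, the total number of distinct
monic irreducible factors of `x^n - 1` over `F_q` is
`gcd(n, q-1) · (1/2 + 2^{r-2}·(2 + ν₂(m))) · ∏_{p | m, p odd prime} (1 + ν_p(m)·(p-1)/p)`. -/
theorem total_count_irreducible_factors_trinomial_case {F : Type*} [Field F] [Fintype F]
    (q : ℕ) (hq : q = Fintype.card F) (n : ℕ) (hn : 0 < n)
    (h1 : q % 4 = 3) (h2 : 8 ∣ n)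
    (h3 : (∏ p ∈ n.primeFactors, p) ∣ (q - 1))
    (m r : ℕ) (hm : m = n / Nat.gcd n (q ^ 2 - 1))
    (hr : r = min ((n / 2).factorization 2) ((q + 1).factorization 2)) :
    (({f : Polynomial F | f.Monic ∧ Irreducible f ∧
          f ∣ (X ^ n - 1 : Polynomial F)}.ncard : ℚ)
      = (Nat.gcd n (q - 1) : ℚ) *
          (1 / 2 + (2 : ℚ) ^ ((r : ℤ) - 2) * (2 + (m.factorization 2 : ℚ))) *
          ∏ p ∈ m.primeFactors.filter (fun p => Odd p),
            (1 + (m.factorization p : ℚ) * ((p : ℚ) - 1) / (p : ℚ))) := by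
  classical
  have hq3 : 3 ≤ q := by omega
  have hn0 : n ≠ 0 := hn.ne'
  have hrad : ∀ p ∈ n.primeFactors, p ∣ q - 1 :=
    fun p hp => (Finset.dvd_prod_of_mem _ hp).trans h3
  have h2dvd : (2:ℕ) ∣ n := (by norm_num : (2:ℕ) ∣ 8).trans h2
  -- coprimality of q and n
  have hco : Nat.Coprime q n := by
    by_contra h
    set p := (Nat.gcd q n).minFac with hp_def
    have hp : p.Prime := Nat.minFac_prime h
    have hpq : p ∣ q := (Nat.minFac_dvd _).trans (Nat.gcd_dvd_left _ _)
    have hpn : p ∣ n := (Nat.minFac_dvd _).trans (Nat.gcd_dvd_right _ _)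
    have hpq1 : p ∣ q - 1 := hrad p (Nat.mem_primeFactors.mpr ⟨hp, hpn, hn0⟩)
    have : p ∣ 1 := by
      have := Nat.dvd_sub hpq hpq1
      rwa [show q - (q - 1) = 1 by omega] at this
    exact hp.one_lt.ne' (Nat.eq_one_of_dvd_one this)
  -- the counting theorem + arithmetic reduction
  rw [count_irreducible_factors q n hq hn hco, sum_phi_div_ord h1 hn hrad]
  -- notation
  set a := n.factorization 2 with ha_def
  set β := (q + 1).factorization 2 with hβ_def
  have ha3 : 3 ≤ a :=
    (Nat.Prime.pow_dvd_iff_le_factorization Nat.prime_two hn0).mp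
      (((by norm_num : (2:ℕ)^3 ∣ 8)).trans h2)
  have hβ2 : 2 ≤ β := by
    rw [hβ_def]
    exact (Nat.Prime.pow_dvd_iff_le_factorization Nat.prime_two (by omega)).mp
      ((show (2:ℕ)^2 = 4 by norm_num) ▸ (by omega : 4 ∣ q + 1))
  have hq21_fac : q ^ 2 - 1 = (q - 1) * (q + 1) := by
    obtain ⟨w, rfl⟩ : ∃ w, q = w + 3 := ⟨q - 3, by omega⟩
    have h : (w + 3) ^ 2 = w * w + 6 * w + 9 := by ring
    have h' : (w + 3 - 1) * (w + 3 + 1) = w * w + 6 * w + 8 := by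
      rw [show w + 3 - 1 = w + 2 by omega]
      ring
    omega
  have hq21_0 : q ^ 2 - 1 ≠ 0 := by
    rw [hq21_fac]
    exact Nat.mul_ne_zero (by omega) (by omega)
  have hGdvd : Nat.gcd n (q ^ 2 - 1) ∣ n := Nat.gcd_dvd_left _ _
  have hG0 : Nat.gcd n (q ^ 2 - 1) ≠ 0 := Nat.gcd_ne_zero_left hn0
  have hmn : m ∣ n := hm ▸ Nat.div_dvd_of_dvd hGdvd
  have hm0 : m ≠ 0 := by
    rw [hm]
    exact (Nat.div_pos (Nat.le_of_dvd hn hGdvd) (Nat.pos_of_ne_zero hG0)).ne'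
  have hfacm : ∀ p : ℕ, m.factorization p
      = n.factorization p - min (n.factorization p) ((q ^ 2 - 1).factorization p) := by
    intro p
    rw [hm, Nat.factorization_div hGdvd, Finsupp.tsub_apply,
      Nat.factorization_gcd hn0 hq21_0, Finsupp.inf_apply]
  have hv2q1 : (q - 1).factorization 2 = 1 := v2_q_sub_one h1
  have hv2q2 : (q ^ 2 - 1).factorization 2 = 1 + β := by
    rw [hq21_fac, Nat.factorization_mul (by omega) (by omega), Finsupp.coe_add,
      Pi.add_apply, hv2q1]
  have hμ2 : m.factorization 2 = a - min a (β + 1) := by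
    rw [hfacm 2, hv2q2]
    omega
  have hr' : r = min (a - 1) β := by
    have hn2 : (n / 2).factorization 2 = a - 1 := by
      rw [Nat.factorization_div h2dvd, Finsupp.tsub_apply]
      have h22 : (2:ℕ).factorization 2 = 1 := by
        rw [Nat.Prime.factorization Nat.prime_two]; simp
      rw [h22]
    rw [hr, hn2]
  have hr2 : 2 ≤ r := by rw [hr']; omega
  -- per-odd-prime facts
  have hμp : ∀ p ∈ n.primeFactors.erase 2, m.factorization p
      = n.factorization p - min (n.factorization p) ((q - 1).factorization p) := by
    intro p hp
    obtain ⟨hp2, hppf⟩ := Finset.mem_erase.mp hp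
    have hpprime := Nat.prime_of_mem_primeFactors hppf
    have hpq1 : ¬ p ∣ q + 1 := by
      intro hdvd
      have hd2 : p ∣ 2 := by
        have := Nat.dvd_sub hdvd (hrad p hppf)
        rwa [show q + 1 - (q - 1) = 2 by omega] at this
      have hle := Nat.le_of_dvd (by norm_num) hd2
      have h2le := hpprime.two_le
      exact hp2 (by omega)
    have : (q ^ 2 - 1).factorization p = (q - 1).factorization p := by
      rw [hq21_fac, Nat.factorization_mul (by omega) (by omega), Finsupp.coe_add,
        Pi.add_apply, Nat.factorization_eq_zero_of_not_dvd hpq1, add_zero]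
    rw [hfacm p, this]
  have h2pf : 2 ∈ n.primeFactors :=
    Nat.mem_primeFactors.mpr ⟨Nat.prime_two, h2dvd, hn0⟩
  -- split the product
  rw [← Finset.mul_prod_erase n.primeFactors _ h2pf]
  rw [show ∑ c ∈ Finset.range (n.factorization 2 + 1), gfun q 2 c
      = 1 + (2:ℚ) ^ (min (a-1) β - 1) * (2 + ((a - min a (β + 1) : ℕ) : ℚ))
    from sum_gfun_two h1 ha3]
  -- rewrite odd factors
  rw [Finset.prod_congr rfl (fun p hp => by
    obtain ⟨hp2, hppf⟩ := Finset.mem_erase.mp hp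
    have hpprime := Nat.prime_of_mem_primeFactors hppf
    rw [sum_gfun_odd hpprime (hpprime.odd_of_ne_two hp2) (hrad p hppf) (by omega),
      ← hμp p hp])]
  rw [Finset.prod_mul_distrib]
  -- rewrite the RHS : gcd factor
  have hfg : ∀ p : ℕ, (Nat.gcd n (q-1)).factorization p
      = min (n.factorization p) ((q-1).factorization p) := by
    intro p
    rw [Nat.factorization_gcd hn0 (by omega : q - 1 ≠ 0), Finsupp.inf_apply]
  have hgq10 : Nat.gcd n (q-1) ≠ 0 := Nat.gcd_ne_zero_left hn0
  have hgcdN : Nat.gcd n (q-1)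
      = ∏ p ∈ n.primeFactors, p ^ (min (n.factorization p) ((q-1).factorization p)) := by
    conv_lhs => rw [← Nat.factorization_prod_pow_eq_self hgq10]
    rw [Nat.prod_factorization_eq_prod_primeFactors]
    rw [Finset.prod_congr rfl (fun p _ => by rw [hfg p])]
    refine Finset.prod_subset (Nat.primeFactors_mono (Nat.gcd_dvd_left _ _) hn0) ?_
    intro p hppf hpnot
    have h0 : (Nat.gcd n (q-1)).factorization p = 0 := by
      rw [← Nat.support_factorization] at hpnot
      exact Finsupp.notMem_support_iff.mp hpnot
    rw [← hfg p, h0, pow_zero]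
  have hgcdQ : (Nat.gcd n (q-1) : ℚ)
      = 2 * ∏ p ∈ n.primeFactors.erase 2,
          (p:ℚ) ^ (min (n.factorization p) ((q-1).factorization p)) := by
    rw [hgcdN]
    push_cast
    rw [← Finset.mul_prod_erase n.primeFactors
      (fun p => (p:ℚ) ^ (min (n.factorization p) ((q-1).factorization p))) h2pf]
    congr 1
    rw [hv2q1, ← ha_def]
    rw [show min a 1 = 1 by omega, pow_one]
    norm_num
  rw [hgcdQ]
  -- rewrite the odd product over m.primeFactors
  have hoddprod : ∏ p ∈ m.primeFactors.filter (fun p => Odd p),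
        (1 + (m.factorization p : ℚ) * ((p : ℚ) - 1) / (p : ℚ))
      = ∏ p ∈ n.primeFactors.erase 2,
        (1 + (m.factorization p : ℚ) * ((p : ℚ) - 1) / (p : ℚ)) := by
    refine Finset.prod_subset ?_ ?_
    · intro p hp
      obtain ⟨hpm, hpodd⟩ := Finset.mem_filter.mp hp
      refine Finset.mem_erase.mpr ⟨?_, Nat.primeFactors_mono hmn hn0 hpm⟩
      rintro rfl
      exact (by norm_num : ¬ Odd 2) hpodd
    · intro p hp hnot
      obtain ⟨hp2, hppf⟩ := Finset.mem_erase.mp hp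
      have hodd : Odd p := (Nat.prime_of_mem_primeFactors hppf).odd_of_ne_two hp2
      have hpm : p ∉ m.primeFactors := fun h => hnot (Finset.mem_filter.mpr ⟨h, hodd⟩)
      have h0 : m.factorization p = 0 := by
        rw [← Nat.support_factorization] at hpm
        exact Finsupp.notMem_support_iff.mp hpm
      rw [h0]
      norm_num
  rw [hoddprod]
  -- final algebra
  rw [hμ2, ← hr']
  have hzpow : (2:ℚ) ^ ((r:ℤ) - 2) = (2:ℚ) ^ ((r - 2 : ℕ)) := by
    rw [show (r:ℤ) - 2 = ((r - 2 : ℕ) : ℤ) by omega, zpow_natCast]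
  rw [hzpow]
  have h2r : (2:ℚ) ^ (r - 1) = (2:ℚ) ^ (r - 2) * 2 := by
    rw [← pow_succ]; congr 1; omega
  have h2r' : (2:ℚ) ^ (r - 1) = (2:ℚ) ^ (r - 2) * 2 := h2r
  rw [h2r]
  ring
end
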